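/- Let p > q > 1 be integers and let ((F_1,…,F_k), I_sep) determine a filled AUX(p,q) instance. Then in any feasible schedule of all tasks of the instance (separator, auxiliary and pending tasks), no task arising from block F_i starts before time ofs(F_i), for every i = 1,…,k. -/

import Mathlib

/-- A task: an integer release time `r`, an integer deadline `d` (together forming the
availability interval `[r, d]`), and a processing time `len : ℕ`. -/
structure Job where
  r : ℤ
  d : ℤ
  len : ℕ

/-- A schedule `t` (real starting times) is feasible for the family of tasks `T`:
every task starts no earlier than its release time, completes no later than its deadline,
and the execution intervals `[t i, t i + len i)` are pairwise disjoint. -/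
def FeasibleSchedule {ι : Type} (T : ι → Job) (t : ι → ℝ) : Prop :=
  (∀ i, ((T i).r : ℝ) ≤ t i ∧ t i + ((T i).len : ℝ) ≤ ((T i).d : ℝ)) ∧
  Pairwise fun i j => Disjoint (Set.Ico (t i) (t i + ((T i).len : ℝ)))
    (Set.Ico (t j) (t j + ((T j).len : ℝ)))

/-- A block: a finite set of auxiliary tasks (given relative to the block's offset), an
optional pair of relative deadlines `(d'_p, d_p)` for a long pending task of length `p`,
and an optional pair of relative deadlines `(d'_q, d_q)` for a short pending task of
length `q`. -/
structure Block (p q : ℕ) where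
  auxJobs : List Job
  pendP : Option (ℤ × ℤ)
  pendQ : Option (ℤ × ℤ)

instance {p q : ℕ} : Inhabited (Block p q) := ⟨⟨[], none, none⟩⟩

/-- The length of a block: the sum of the processing times of all its tasks
(auxiliary and pending). -/
def Block.L {p q : ℕ} (F : Block p q) : ℕ :=
  (F.auxJobs.map Job.len).sum + (F.pendP.elim 0 fun _ => p) + (F.pendQ.elim 0 fun _ => q)

/-- Well-formedness of a block: auxiliary tasks have processing times in `{p, q}`,
non-negative release times, and all deadlines of the block lie in `[1, L(F)+1]`;
for each pending task the two deadlines satisfy `d' ≤ d`. -/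
def Block.WF {p q : ℕ} (F : Block p q) : Prop :=
  (∀ T ∈ F.auxJobs, (T.len = p ∨ T.len = q) ∧ 0 ≤ T.r ∧ 1 ≤ T.d ∧ T.d ≤ (F.L : ℤ) + 1) ∧
  (∀ dd ∈ F.pendP, dd.1 ≤ dd.2 ∧ 1 ≤ dd.1 ∧ dd.2 ≤ (F.L : ℤ) + 1) ∧
  (∀ dd ∈ F.pendQ, dd.1 ≤ dd.2 ∧ 1 ≤ dd.1 ∧ dd.2 ≤ (F.L : ℤ) + 1)

/-- The offset of the `i`-th block (0-based): `ofs 0 = 0`, and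
`ofs (i+1) = ofs i + L(F_i) + (q + 1 if a separator is placed after block i else 0)`. -/
def ofs (p q : ℕ) (B : List (Block p q)) (S : Finset ℕ) : ℕ → ℤ
  | 0 => 0
  | i + 1 => ofs p q B S i + ((B.getD i default).L : ℤ) +
      (if i ∈ S then (q : ℤ) + 1 else 0)

/-- The separator tasks of the filled instance, each labelled by the 0-based index of the
block it follows: for `i ∈ S`, the task `([ofs i + L i + 1, ofs i + L i + q + 1], q)`. -/
def sepList (p q : ℕ) (B : List (Block p q)) (S : Finset ℕ) : List (ℕ × Job) :=
  (List.range B.length).filterMap fun i =>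
    if i ∈ S then
      some (i, ⟨ofs p q B S i + ((B.getD i default).L : ℤ) + 1,
        ofs p q B S i + ((B.getD i default).L : ℤ) + q + 1, q⟩)
    else none

/-- The auxiliary tasks of the filled instance, labelled by the 0-based index of the block
they come from, shifted by the block's offset. -/
def auxList (p q : ℕ) (B : List (Block p q)) (S : Finset ℕ) : List (ℕ × Job) :=
  (List.range B.length).flatMap fun i =>
    (B.getD i default).auxJobs.map fun T =>
      (i, ⟨T.r + ofs p q B S i, T.d + ofs p q B S i, T.len⟩)

/-- The long pending tasks of the filled instance, in the order of the defining blocks: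
each entry records the 0-based index of the defining block and the absolute pair of
deadlines `(d' + ofs, d + ofs)`. -/
def pendPList (p q : ℕ) (B : List (Block p q)) (S : Finset ℕ) : List (ℕ × ℤ × ℤ) :=
  (List.range B.length).filterMap fun i =>
    (B.getD i default).pendP.map fun dd =>
      (i, dd.1 + ofs p q B S i, dd.2 + ofs p q B S i)

/-- The short pending tasks of the filled instance, analogous to `pendPList`. -/
def pendQList (p q : ℕ) (B : List (Block p q)) (S : Finset ℕ) : List (ℕ × ℤ × ℤ) :=
  (List.range B.length).filterMap fun i =>
    (B.getD i default).pendQ.map fun dd =>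
      (i, dd.1 + ofs p q B S i, dd.2 + ofs p q B S i)

/-- The index type of the tasks of the filled AUX(p,q) instance:
separator, auxiliary, long pending and short pending tasks. -/
abbrev FilledIdx (p q : ℕ) (B : List (Block p q)) (S : Finset ℕ) : Type :=
  Fin (sepList p q B S).length ⊕ Fin (auxList p q B S).length ⊕
    Fin (pendPList p q B S).length ⊕ Fin (pendQList p q B S).length

/-- The family of all tasks of the filled AUX(p,q) instance.  The long pending task with
absolute deadlines `(d', d)` is the task `([0, d], p)` (with early deadline `d'`), and
similarly for the short pending tasks. -/
def filledFamily (p q : ℕ) (B : List (Block p q)) (S : Finset ℕ) :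
    FilledIdx p q B S → Job :=
  Sum.elim (fun i => ((sepList p q B S).get i).2) <|
    Sum.elim (fun i => ((auxList p q B S).get i).2) <|
      Sum.elim (fun i => ⟨0, ((pendPList p q B S).get i).2.2, p⟩)
        (fun i => ⟨0, ((pendQList p q B S).get i).2.2, q⟩)

/-- Feasibility of the filled AUX(p,q) instance: there are equally many pending tasks of
each length, and there is a feasible schedule of all tasks such that for each index `i`,
the `i`-th long pending task completes by its early deadline or the `i`-th short pending
task completes by its early deadline. -/
def FilledFeasible (p q : ℕ) (B : List (Block p q)) (S : Finset ℕ) : Prop :=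
  ∃ (h : (pendPList p q B S).length = (pendQList p q B S).length)
    (t : FilledIdx p q B S → ℝ),
    FeasibleSchedule (filledFamily p q B S) t ∧
    ∀ i : Fin (pendPList p q B S).length,
      t (Sum.inr (Sum.inr (Sum.inl i))) + (p : ℝ) ≤
          (((pendPList p q B S).get i).2.1 : ℝ) ∨
        t (Sum.inr (Sum.inr (Sum.inr (Fin.cast h i)))) + (q : ℝ) ≤
          (((pendQList p q B S).get (Fin.cast h i)).2.1 : ℝ)

open MeasureTheory Set

lemma vol_lemma {ι : Type} (s : Finset ι) (a b : ℝ) (x l : ι → ℝ)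
    (hab : a ≤ b)
    (hl : ∀ i ∈ s, 0 ≤ l i)
    (hsub : ∀ i ∈ s, Set.Ico (x i) (x i + l i) ⊆ Set.Ico a b)
    (hdisj : (s : Set ι).Pairwise fun i j => Disjoint (Set.Ico (x i) (x i + l i)) (Set.Ico (x j) (x j + l j))) :
    ∑ i ∈ s, l i ≤ b - a := by
  have h1 : ∑ i ∈ s, ENNReal.ofReal (l i) = volume (⋃ i ∈ s, Set.Ico (x i) (x i + l i)) := by
    rw [measure_biUnion_finset hdisj (fun i _ => measurableSet_Ico)]
    refine Finset.sum_congr rfl fun i _ => ?_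
    rw [Real.volume_Ico]; congr 1; ring
  have h2 : volume (⋃ i ∈ s, Set.Ico (x i) (x i + l i)) ≤ volume (Set.Ico a b) :=
    measure_mono (Set.iUnion₂_subset hsub)
  rw [Real.volume_Ico] at h2
  rw [← h1, ← ENNReal.ofReal_sum_of_nonneg hl] at h2
  exact (ENNReal.ofReal_le_ofReal_iff (by linarith)).mp h2


lemma listA {α : Type*} {M : Type*} [AddCommMonoid M] (l : List α) (g : α → M) :
    ∑ j : Fin l.length, g (l.get j) = (l.map g).sum := by
  induction l with
  | nil => simp
  | cons a tl ih => simpa [Fin.sum_univ_succ] using ih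

lemma sum_map_flatMap {α M : Type*} [AddCommMonoid M] (n : ℕ) (f : ℕ → List α) (g : α → M) :
    (((List.range n).flatMap f).map g).sum = ∑ i ∈ Finset.range n, ((f i).map g).sum := by
  induction n with
  | zero => simp
  | succ n ih =>
      rw [List.range_succ, List.flatMap_append, List.map_append, List.sum_append, ih,
        Finset.sum_range_succ]
      simp

lemma sum_map_filterMap {α M : Type*} [AddCommMonoid M] (n : ℕ) (f : ℕ → Option α) (g : α → M) :
    (((List.range n).filterMap f).map g).sum = ∑ i ∈ Finset.range n, ((f i).elim 0 g) := by
  rw [List.filterMap_eq_flatMap_toList, sum_map_flatMap]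
  refine Finset.sum_congr rfl fun i _ => ?_
  cases f i <;> simp

section Spec
variable (p q : ℕ) (B : List (Block p q)) (S : Finset ℕ)

lemma getD_mem {c : ℕ} (hc : c < B.length) : B.getD c default ∈ B := by
  rw [List.getD_eq_getElem B default hc]; exact List.getElem_mem _

lemma ofs_succ (c : ℕ) : ofs p q B S (c+1) =
    ofs p q B S c + ((B.getD c default).L : ℤ) + (if c ∈ S then (q:ℤ)+1 else 0) := rfl

lemma ofs_mono : Monotone (ofs p q B S) := by
  apply monotone_nat_of_le_succ
  intro c
  rw [ofs_succ]
  have : (0:ℤ) ≤ (if c ∈ S then (q:ℤ)+1 else 0) := by positivity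
  omega

lemma ofs_tele {a b : ℕ} (h : a ≤ b) : ofs p q B S b = ofs p q B S a +
    ∑ c ∈ Finset.Ico a b, (((B.getD c default).L : ℤ) + (if c ∈ S then (q:ℤ)+1 else 0)) := by
  induction b, h using Nat.le_induction with
  | base => simp
  | succ b hab ih =>
      rw [Finset.sum_Ico_succ_top hab, ofs_succ, ih]; ring

lemma aux_spec (j : Fin (auxList p q B S).length) :
    ∃ c, c < B.length ∧ ∃ T ∈ (B.getD c default).auxJobs,
      (auxList p q B S).get j =
        (c, ⟨T.r + ofs p q B S c, T.d + ofs p q B S c, T.len⟩) := by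
  obtain ⟨e, hE, h⟩ : ∃ e, (auxList p q B S).get j = e ∧ e ∈ auxList p q B S :=
    ⟨_, rfl, List.get_mem _ _⟩
  rw [hE]
  simp only [auxList, List.mem_flatMap, List.mem_range, List.mem_map] at h
  obtain ⟨c, hc, T, hT, he⟩ := h
  exact ⟨c, hc, T, hT, he.symm⟩

lemma pendP_spec (j : Fin (pendPList p q B S).length) :
    ∃ c, c < B.length ∧ ∃ dd, (B.getD c default).pendP = some dd ∧
      (pendPList p q B S).get j = (c, dd.1 + ofs p q B S c, dd.2 + ofs p q B S c) := by
  obtain ⟨e, hE, h⟩ : ∃ e, (pendPList p q B S).get j = e ∧ e ∈ pendPList p q B S :=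
    ⟨_, rfl, List.get_mem _ _⟩
  rw [hE]
  simp only [pendPList, List.mem_filterMap, List.mem_range, Option.map_eq_some_iff] at h
  obtain ⟨c, hc, dd, hdd, he⟩ := h
  exact ⟨c, hc, dd, hdd, he.symm⟩

lemma pendQ_spec (j : Fin (pendQList p q B S).length) :
    ∃ c, c < B.length ∧ ∃ dd, (B.getD c default).pendQ = some dd ∧
      (pendQList p q B S).get j = (c, dd.1 + ofs p q B S c, dd.2 + ofs p q B S c) := by
  obtain ⟨e, hE, h⟩ : ∃ e, (pendQList p q B S).get j = e ∧ e ∈ pendQList p q B S :=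
    ⟨_, rfl, List.get_mem _ _⟩
  rw [hE]
  simp only [pendQList, List.mem_filterMap, List.mem_range, Option.map_eq_some_iff] at h
  obtain ⟨c, hc, dd, hdd, he⟩ := h
  exact ⟨c, hc, dd, hdd, he.symm⟩

lemma sep_spec (j : Fin (sepList p q B S).length) :
    ∃ c, c < B.length ∧ c ∈ S ∧
      (sepList p q B S).get j =
        (c, ⟨ofs p q B S c + ((B.getD c default).L : ℤ) + 1,
          ofs p q B S c + ((B.getD c default).L : ℤ) + q + 1, q⟩) := by
  obtain ⟨e, hE, h⟩ : ∃ e, (sepList p q B S).get j = e ∧ e ∈ sepList p q B S :=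
    ⟨_, rfl, List.get_mem _ _⟩
  rw [hE]
  simp only [sepList, List.mem_filterMap, List.mem_range] at h
  obtain ⟨c, hc, he⟩ := h
  by_cases hcS : c ∈ S
  · rw [if_pos hcS] at he
    exact ⟨c, hc, hcS, (Option.some_inj.mp he).symm⟩
  · rw [if_neg hcS] at he; exact absurd he (by simp)

lemma sep_mem {c : ℕ} (hc : c < B.length) (hcS : c ∈ S) :
    ∃ j : Fin (sepList p q B S).length,
      (sepList p q B S).get j =
        (c, ⟨ofs p q B S c + ((B.getD c default).L : ℤ) + 1,
          ofs p q B S c + ((B.getD c default).L : ℤ) + q + 1, q⟩) := by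
  apply List.get_of_mem
  simp only [sepList, List.mem_filterMap, List.mem_range]
  exact ⟨c, hc, by rw [if_pos hcS]⟩

end Spec


/-- The block label of a task index. -/
def labF (p q : ℕ) (B : List (Block p q)) (S : Finset ℕ) : FilledIdx p q B S → ℕ :=
  Sum.elim (fun j => ((sepList p q B S).get j).1) <|
    Sum.elim (fun j => ((auxList p q B S).get j).1) <|
      Sum.elim (fun j => ((pendPList p q B S).get j).1)
        (fun j => ((pendQList p q B S).get j).1)

section Sums
variable (p q : ℕ) (B : List (Block p q)) (S : Finset ℕ)

lemma aux_sum (P : ℕ → Prop) [DecidablePred P] :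
    (∑ j : Fin (auxList p q B S).length,
      if P ((auxList p q B S).get j).1 then (((auxList p q B S).get j).2.len : ℝ) else 0)
    = ∑ i ∈ Finset.range B.length,
        if P i then (((B.getD i default).auxJobs.map Job.len).sum : ℝ) else 0 := by
  rw [listA (auxList p q B S) (fun e => if P e.1 then (e.2.len : ℝ) else 0)]
  show (((List.range B.length).flatMap _).map _).sum = _
  rw [sum_map_flatMap]
  refine Finset.sum_congr rfl fun i _ => ?_
  rw [List.map_map]
  by_cases hP : P i
  · simp only [hP, if_true, Function.comp_def]
    rw [Nat.cast_list_sum, List.map_map]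
    rfl
  · simp [hP, Function.comp_def]

lemma pendP_sum (P : ℕ → Prop) [DecidablePred P] :
    (∑ j : Fin (pendPList p q B S).length,
      if P ((pendPList p q B S).get j).1 then (p : ℝ) else 0)
    = ∑ i ∈ Finset.range B.length,
        if P i then (((B.getD i default).pendP.elim 0 fun _ => p : ℕ) : ℝ) else 0 := by
  rw [listA (pendPList p q B S) (fun e => if P e.1 then (p : ℝ) else 0)]
  show (((List.range B.length).filterMap _).map _).sum = _
  rw [sum_map_filterMap]
  refine Finset.sum_congr rfl fun i _ => ?_
  cases (B.getD i default).pendP <;> simp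

lemma pendQ_sum (P : ℕ → Prop) [DecidablePred P] :
    (∑ j : Fin (pendQList p q B S).length,
      if P ((pendQList p q B S).get j).1 then (q : ℝ) else 0)
    = ∑ i ∈ Finset.range B.length,
        if P i then (((B.getD i default).pendQ.elim 0 fun _ => q : ℕ) : ℝ) else 0 := by
  rw [listA (pendQList p q B S) (fun e => if P e.1 then (q : ℝ) else 0)]
  show (((List.range B.length).filterMap _).map _).sum = _
  rw [sum_map_filterMap]
  refine Finset.sum_congr rfl fun i _ => ?_
  cases (B.getD i default).pendQ <;> simp

lemma sum_len (lo hi : ℕ) (hhi : hi < B.length) :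
    (∑ e : FilledIdx p q B S,
      if lo ≤ labF p q B S e ∧ labF p q B S e ≤ hi ∧ e.isRight = true
      then ((filledFamily p q B S e).len : ℝ) else 0)
    = ∑ c ∈ Finset.Icc lo hi, (((B.getD c default).L : ℕ) : ℝ) := by
  classical
  rw [Fintype.sum_sum_type, Fintype.sum_sum_type, Fintype.sum_sum_type]
  have hsep : (∑ j : Fin (sepList p q B S).length,
      if lo ≤ labF p q B S (Sum.inl j) ∧ labF p q B S (Sum.inl j) ≤ hi ∧
          (Sum.inl j : FilledIdx p q B S).isRight = true
      then ((filledFamily p q B S (Sum.inl j)).len : ℝ) else 0) = 0 := by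
    simp
  rw [hsep, zero_add]
  set P : ℕ → Prop := fun c => lo ≤ c ∧ c ≤ hi with hP
  have h1 := aux_sum p q B S P
  have h2 := pendP_sum p q B S P
  have h3 := pendQ_sum p q B S P
  simp only [labF, filledFamily, Sum.elim_inr, Sum.elim_inl, Sum.isRight_inr, and_true]
  rw [h1, h2, h3, ← Finset.sum_add_distrib, ← Finset.sum_add_distrib]
  have : ∀ i ∈ Finset.range B.length,
      ((if P i then (((B.getD i default).auxJobs.map Job.len).sum : ℝ) else 0) +
        ((if P i then (((B.getD i default).pendP.elim 0 fun _ => p : ℕ) : ℝ) else 0) +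
        (if P i then (((B.getD i default).pendQ.elim 0 fun _ => q : ℕ) : ℝ) else 0)))
      = if P i then (((B.getD i default).L : ℕ) : ℝ) else 0 := by
    intro i _
    by_cases hPi : P i
    · rw [if_pos hPi, if_pos hPi, if_pos hPi, if_pos hPi]
      rw [Block.L]
      push_cast
      ring
    · rw [if_neg hPi, if_neg hPi, if_neg hPi, if_neg hPi]
      ring
  rw [Finset.sum_congr rfl this, ← Finset.sum_filter]
  apply Finset.sum_congr _ (fun _ _ => rfl)
  ext i
  simp only [Finset.mem_filter, Finset.mem_range, Finset.mem_Icc, hP]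
  omega

end Sums


section Core
variable {p q : ℕ} {B : List (Block p q)} {S : Finset ℕ}

lemma task_facts (hq : 1 < q) (hpq : q < p) (hWF : ∀ F ∈ B, F.WF)
    (e : FilledIdx p q B S) (he : e.isRight = true) :
    labF p q B S e < B.length ∧ 2 ≤ (filledFamily p q B S e).len ∧
      (filledFamily p q B S e).d ≤ ofs p q B S (labF p q B S e) +
        ((B.getD (labF p q B S e) default).L : ℤ) + 1 := by
  match e with
  | Sum.inl j => simp at he
  | Sum.inr (Sum.inl j) =>
      obtain ⟨c, hc, T, hT, hj⟩ := aux_spec p q B S j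
      have hwf := (hWF _ (getD_mem p q B hc)).1 T hT
      simp only [labF, filledFamily, Sum.elim_inr, Sum.elim_inl, hj]
      refine ⟨hc, ?_, ?_⟩
      · rcases hwf.1 with h | h <;> omega
      · have := hwf.2.2.2; omega
  | Sum.inr (Sum.inr (Sum.inl j)) =>
      obtain ⟨c, hc, dd, hdd, hj⟩ := pendP_spec p q B S j
      have hwf := (hWF _ (getD_mem p q B hc)).2.1 dd hdd
      simp only [labF, filledFamily, Sum.elim_inr, Sum.elim_inl, hj]
      refine ⟨hc, by omega, ?_⟩
      have := hwf.2.2; omega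
  | Sum.inr (Sum.inr (Sum.inr j)) =>
      obtain ⟨c, hc, dd, hdd, hj⟩ := pendQ_spec p q B S j
      have hwf := (hWF _ (getD_mem p q B hc)).2.2 dd hdd
      simp only [labF, filledFamily, Sum.elim_inr, Sum.elim_inl, hj]
      refine ⟨hc, by omega, ?_⟩
      have := hwf.2.2; omega

lemma engine (hq : 1 < q) (hpq : q < p) (hWF : ∀ F ∈ B, F.WF)
    (t : FilledIdx p q B S → ℝ) (hfeas : FeasibleSchedule (filledFamily p q B S) t)
    (lo hi : ℕ) (E : ℤ) (e : FilledIdx p q B S) (μ : ℝ)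
    (hhiK : hi < B.length) (he : e.isRight = true) (hilab : hi < labF p q B S e)
    (hlow : ∀ e', e'.isRight = true → lo ≤ labF p q B S e' → labF p q B S e' ≤ hi →
      ((ofs p q B S (labF p q B S e') : ℤ) : ℝ) ≤ t e')
    (hEc : ∀ c', lo ≤ c' → c' ≤ hi →
      ofs p q B S c' + ((B.getD c' default).L : ℤ) + 1 ≤ E)
    (hsum : ∑ c ∈ Finset.Icc lo hi, ((B.getD c default).L : ℤ) = E - 1 - ofs p q B S lo)
    (hb : ((ofs p q B S lo : ℤ) : ℝ) ≤ t e)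
    (hμ1 : 1 < μ) (hμ2 : μ ≤ ((filledFamily p q B S e).len : ℝ))
    (hμ3 : t e + μ ≤ (E : ℝ)) : False := by
  classical
  set b : ℝ := ((ofs p q B S lo : ℤ) : ℝ) with hbdef
  set s : Finset (FilledIdx p q B S) := Finset.univ.filter
    (fun e' => lo ≤ labF p q B S e' ∧ labF p q B S e' ≤ hi ∧ e'.isRight = true) with hs
  have hes : e ∉ s := by
    simp only [hs, Finset.mem_filter, Finset.mem_univ, true_and]
    rintro ⟨-, h2, -⟩; omega
  set l : FilledIdx p q B S → ℝ :=
    fun e' => if e' = e then μ else ((filledFamily p q B S e').len : ℝ) with hl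
  -- the monotone bound: each scheduled (possibly truncated) interval sits inside [b, E)
  have hsub : ∀ e' ∈ insert e s, Set.Ico (t e') (t e' + l e') ⊆ Set.Ico b (E : ℝ) := by
    intro e' he'
    rcases Finset.mem_insert.mp he' with rfl | he'
    · rw [hl]; simp only [if_pos rfl]
      exact Set.Ico_subset_Ico hb hμ3
    · simp only [hs, Finset.mem_filter, Finset.mem_univ, true_and] at he'
      obtain ⟨h1, h2, h3⟩ := he'
      have hne : e' ≠ e := by rintro rfl; omega
      rw [hl]; simp only [if_neg hne]
      apply Set.Ico_subset_Ico
      · calc b ≤ ((ofs p q B S (labF p q B S e') : ℤ) : ℝ) := by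
              rw [hbdef]; exact_mod_cast Int.cast_le.mpr (ofs_mono p q B S h1)
          _ ≤ t e' := hlow e' h3 h1 h2
      · obtain ⟨hcK, hlen2, hd⟩ := task_facts hq hpq hWF e' h3
        have hfe := (hfeas.1 e').2
        have hE' := hEc (labF p q B S e') h1 h2
        have : ((filledFamily p q B S e').d : ℝ) ≤ (E : ℝ) := by exact_mod_cast (hd.trans hE')
        linarith
  have hab : b ≤ (E : ℝ) := by linarith
  have hlnn : ∀ e' ∈ insert e s, 0 ≤ l e' := by
    intro e' _
    by_cases hc : e' = e
    · subst hc; simp only [hl, if_pos rfl]; linarith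
    · simp only [hl, if_neg hc]; positivity
  have hdisj : ((insert e s : Finset (FilledIdx p q B S)) : Set (FilledIdx p q B S)).Pairwise
      fun i j => Disjoint (Set.Ico (t i) (t i + l i)) (Set.Ico (t j) (t j + l j)) := by
    intro e1 _ e2 _ hne
    have hD := hfeas.2 hne
    have hkey : ∀ e1, Set.Ico (t e1) (t e1 + l e1) ⊆
        Set.Ico (t e1) (t e1 + ((filledFamily p q B S e1).len : ℝ)) := by
      intro e1
      apply Set.Ico_subset_Ico le_rfl
      gcongr
      by_cases hc : e1 = e
      · subst hc; simp only [hl, if_pos rfl]; exact hμ2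
      · simp only [hl, if_neg hc]; exact le_rfl
    exact Set.disjoint_of_subset (hkey e1) (hkey e2) hD
  have hvol := vol_lemma (insert e s) b (E : ℝ) t l hab hlnn hsub hdisj
  rw [Finset.sum_insert hes] at hvol
  have hle : l e = μ := by rw [hl]; simp
  have hrest : ∑ e' ∈ s, l e' = ∑ c ∈ Finset.Icc lo hi, (((B.getD c default).L : ℕ) : ℝ) := by
    rw [← sum_len p q B S lo hi hhiK]
    rw [hs, Finset.sum_filter]
    refine Finset.sum_congr rfl fun e' _ => ?_
    by_cases hP : lo ≤ labF p q B S e' ∧ labF p q B S e' ≤ hi ∧ e'.isRight = true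
    · rw [if_pos hP, if_pos hP]
      simp only [hl]
      rw [if_neg (by rintro rfl; omega)]
    · rw [if_neg hP, if_neg hP]
  have hsumR : ∑ c ∈ Finset.Icc lo hi, (((B.getD c default).L : ℕ) : ℝ)
      = (E : ℝ) - 1 - b := by
    have : ((∑ c ∈ Finset.Icc lo hi, ((B.getD c default).L : ℤ) : ℤ) : ℝ)
        = ((E - 1 - ofs p q B S lo : ℤ) : ℝ) := by rw [hsum]
    push_cast at this
    rw [hbdef]
    push_cast
    convert this using 2
  rw [hle, hrest, hsumR] at hvol
  linarith

end Core


section Key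
variable {p q : ℕ} {B : List (Block p q)} {S : Finset ℕ}

lemma key (hq : 1 < q) (hpq : q < p) (hWF : ∀ F ∈ B, F.WF)
    (t : FilledIdx p q B S → ℝ) (hfeas : FeasibleSchedule (filledFamily p q B S) t) :
    ∀ (n : ℕ) (e : FilledIdx p q B S), labF p q B S e = n →
      ((ofs p q B S n : ℤ) : ℝ) ≤ t e := by
  intro n
  induction n using Nat.strong_induction_on with
  | _ n IH =>
  intro e hlab
  -- trivial for separator tasks (release time is past the offset)
  rcases e with j | j | e''
  · obtain ⟨c, hcK, hcS, hj⟩ := sep_spec p q B S j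
    have hlabc : labF p q B S (Sum.inl j) = c := by
      rw [show labF p q B S (Sum.inl j) = ((sepList p q B S).get j).1 from rfl, hj]
    rw [hlabc] at hlab; subst hlab
    have hr := (hfeas.1 (Sum.inl j)).1
    simp only [filledFamily, Sum.elim_inl, hj] at hr
    have hL : (0:ℤ) ≤ ((B.getD c default).L : ℤ) := Int.ofNat_nonneg _
    have : ((ofs p q B S c : ℤ) : ℝ) ≤ ((ofs p q B S c + ((B.getD c default).L : ℤ) + 1 : ℤ) : ℝ) := by
      exact_mod_cast by omega
    exact this.trans hr
  · -- auxiliary tasks: release time is at least the offset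
    obtain ⟨c, hcK, T, hT, hj⟩ := aux_spec p q B S j
    have hlabc : labF p q B S (Sum.inr (Sum.inl j)) = c := by
      rw [show labF p q B S (Sum.inr (Sum.inl j)) = ((auxList p q B S).get j).1 from rfl, hj]
    rw [hlabc] at hlab; subst hlab
    have hr := (hfeas.1 (Sum.inr (Sum.inl j))).1
    simp only [filledFamily, Sum.elim_inr, Sum.elim_inl, hj] at hr
    have hTr := ((hWF _ (getD_mem p q B hcK)).1 T hT).2.1
    have : ((ofs p q B S c : ℤ) : ℝ) ≤ ((T.r + ofs p q B S c : ℤ) : ℝ) := by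
      exact_mod_cast by omega
    exact this.trans hr
  -- pending tasks: the volume argument
  have he : (Sum.inr (Sum.inr e'') : FilledIdx p q B S).isRight = true := rfl
  set e : FilledIdx p q B S := Sum.inr (Sum.inr e'') with hedef
  have hr0 : (filledFamily p q B S e).r = 0 := by
    rcases e'' with j | j <;> rfl
  clear_value e
  clear hedef e''
  obtain ⟨hnK, hlen2, hd⟩ := task_facts hq hpq hWF e he
  rw [hlab] at hnK hd
  by_contra hx
  push_neg at hx
  set x := t e with hxdef
  have hx0 : (0:ℝ) ≤ x := by
    have h := (hfeas.1 e).1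
    rw [hr0] at h; simpa using h
  have hn0 : n ≠ 0 := by
    rintro rfl
    rw [show ofs p q B S 0 = 0 from rfl] at hx
    simp at hx; linarith
  have hℓ2 : (2:ℝ) ≤ ((filledFamily p q B S e).len : ℝ) := by exact_mod_cast hlen2
  classical
  set D : Finset ℕ := (Finset.range n ∩ S).filter
    (fun m => x < ((ofs p q B S (m+1) : ℤ) : ℝ)) with hD
  set D' : Finset ℕ := (Finset.range n ∩ S).filter
    (fun m => ((ofs p q B S (m+1) : ℤ) : ℝ) ≤ x) with hD'
  have hDmem : ∀ b : ℕ, b ∈ D ↔ (b < n ∧ b ∈ S) ∧ x < ((ofs p q B S (b+1) : ℤ) : ℝ) := by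
    intro b
    rw [hD]
    simp [Finset.mem_filter, Finset.mem_inter, Finset.mem_range, and_assoc]
  have hD'mem : ∀ b : ℕ, b ∈ D' ↔ (b < n ∧ b ∈ S) ∧ ((ofs p q B S (b+1) : ℤ) : ℝ) ≤ x := by
    intro b
    rw [hD']
    simp [Finset.mem_filter, Finset.mem_inter, Finset.mem_range, and_assoc]
  obtain ⟨lo, hlon, hlox, hwind⟩ : ∃ lo, lo ≤ n ∧ ((ofs p q B S lo : ℤ) : ℝ) ≤ x ∧
      ∀ m' ∈ S, m' < n → lo ≤ m' → x < ((ofs p q B S (m'+1) : ℤ) : ℝ) := by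
    by_cases h : D'.Nonempty
    · refine ⟨D'.max' h + 1, ?_, ?_, ?_⟩
      · have := (hD'mem _).mp (D'.max'_mem h)
        omega
      · exact ((hD'mem _).mp (D'.max'_mem h)).2
      · intro m' h1 h2 h3
        by_contra hcon
        push_neg at hcon
        have hmem : m' ∈ D' := (hD'mem _).mpr ⟨⟨h2, h1⟩, hcon⟩
        have := D'.le_max' m' hmem
        omega
    · refine ⟨0, Nat.zero_le _, by simpa [show ofs p q B S 0 = 0 from rfl] using hx0, ?_⟩
      intro m' h1 h2 _
      by_contra hcon
      push_neg at hcon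
      exact h ⟨m', (hD'mem _).mpr ⟨⟨h2, h1⟩, hcon⟩⟩
  have hlow : ∀ (hi : ℕ), hi < n → ∀ e', e'.isRight = true → lo ≤ labF p q B S e' →
      labF p q B S e' ≤ hi → ((ofs p q B S (labF p q B S e') : ℤ) : ℝ) ≤ t e' :=
    fun hi hhi e' _ _ h2 => IH (labF p q B S e') (by omega) e' rfl
  by_cases hDne : D.Nonempty
  · -- there is a separator between the candidate window's end and block n
    set m := D.min' hDne with hm
    obtain ⟨⟨hmn, hmS⟩, hxm⟩ := (hDmem _).mp (D.min'_mem hDne)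
    have hmK : m < B.length := by omega
    have hlom : lo ≤ m := by
      by_contra h
      push_neg at h
      have hmono : ofs p q B S (m+1) ≤ ofs p q B S lo := ofs_mono p q B S (by omega)
      have : ((ofs p q B S (m+1) : ℤ) : ℝ) ≤ ((ofs p q B S lo : ℤ) : ℝ) := by exact_mod_cast hmono
      linarith
    set E : ℤ := ofs p q B S m + ((B.getD m default).L : ℤ) + 1 with hE
    -- the separator after block m is pinned
    obtain ⟨js, hjs⟩ := sep_mem p q B S hmK hmS
    have hr := (hfeas.1 (Sum.inl js)).1
    have hdl := (hfeas.1 (Sum.inl js)).2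
    simp only [filledFamily, Sum.elim_inl, hjs] at hr hdl
    have hts : t (Sum.inl js) = (E : ℝ) := by
      rw [hE]; push_cast at hr hdl ⊢; linarith
    have hne : (Sum.inl js : FilledIdx p q B S) ≠ e := by
      intro h; rw [← h] at he; simp at he
    have hdisj : Disjoint
        (Set.Ico (t (Sum.inl js)) (t (Sum.inl js) + ((filledFamily p q B S (Sum.inl js)).len : ℝ)))
        (Set.Ico (t e) (t e + ((filledFamily p q B S e).len : ℝ))) := hfeas.2 hne
    have hlenjs : (filledFamily p q B S (Sum.inl js)).len = q := by
      rw [show filledFamily p q B S (Sum.inl js) = ((sepList p q B S).get js).2 from rfl, hjs]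
    rw [Set.Ico_disjoint_Ico, hlenjs, hts] at hdisj
    have hofsm1 : (ofs p q B S (m+1) : ℤ) = E + q := by
      rw [ofs_succ, if_pos hmS, hE]; ring
    have hxEq : x < (E : ℝ) + q := by
      rw [hofsm1] at hxm; push_cast at hxm; linarith
    have hq2 : (2:ℝ) ≤ (q:ℝ) := by exact_mod_cast hq
    have hxE : x + ((filledFamily p q B S e).len : ℝ) ≤ (E : ℝ) := by
      by_contra hcon
      push_neg at hcon
      rcases min_le_iff.mp hdisj with h1 | h1 <;>
        rcases le_max_iff.mp h1 with h2 | h2 <;> linarith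
    have hEc : ∀ c', lo ≤ c' → c' ≤ m →
        ofs p q B S c' + ((B.getD c' default).L : ℤ) + 1 ≤ E := by
      intro c' h1 h2
      rcases eq_or_lt_of_le h2 with rfl | h2'
      · omega
      · have hstep : ofs p q B S c' + ((B.getD c' default).L : ℤ) ≤ ofs p q B S (c'+1) := by
          rw [ofs_succ]
          have h0 : (0:ℤ) ≤ (if c' ∈ S then (q:ℤ)+1 else 0) := by positivity
          omega
        have hmono : ofs p q B S (c'+1) ≤ ofs p q B S m := ofs_mono p q B S (by omega)
        have hL : (0:ℤ) ≤ ((B.getD m default).L : ℤ) := Int.ofNat_nonneg _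
        omega
    have hsum : ∑ c ∈ Finset.Icc lo m, ((B.getD c default).L : ℤ)
        = E - 1 - ofs p q B S lo := by
      have htele := ofs_tele p q B S (show lo ≤ m+1 by omega)
      rw [Finset.sum_add_distrib] at htele
      have hite : ∑ c ∈ Finset.Ico lo (m+1), (if c ∈ S then (q:ℤ)+1 else 0) = (q:ℤ)+1 := by
        rw [Finset.sum_eq_single_of_mem m (by simp only [Finset.mem_Ico]; omega)]
        · rw [if_pos hmS]
        · intro b hb hbm
          simp only [Finset.mem_Ico] at hb
          rw [if_neg]
          intro hbS
          have hbD : b ∈ D := (hDmem _).mpr ⟨⟨by omega, hbS⟩, hwind b hbS (by omega) hb.1⟩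
          have := D.min'_le b hbD
          omega
      rw [hite, hofsm1] at htele
      rw [← Finset.Ico_add_one_right_eq_Icc]
      omega
    exact engine hq hpq hWF t hfeas lo m E e ((filledFamily p q B S e).len : ℝ)
      hmK he (by omega) (hlow m hmn) hEc hsum hlox (by linarith) le_rfl hxE
  · -- no separator in the window: it ends just before block n's deadline region
    have hnosep : ∀ c ∈ S, lo ≤ c → c < n → False := by
      intro c h1 h2 h3
      exact hDne ⟨c, (hDmem _).mpr ⟨⟨h3, h1⟩, hwind c h1 h3 h2⟩⟩
    set E : ℤ := ofs p q B S n + 1 with hE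
    have hn1 : 1 ≤ n := by omega
    have hEc : ∀ c', lo ≤ c' → c' ≤ n - 1 →
        ofs p q B S c' + ((B.getD c' default).L : ℤ) + 1 ≤ E := by
      intro c' h1 h2
      have hstep : ofs p q B S c' + ((B.getD c' default).L : ℤ) ≤ ofs p q B S (c'+1) := by
        rw [ofs_succ]
        have h0 : (0:ℤ) ≤ (if c' ∈ S then (q:ℤ)+1 else 0) := by positivity
        omega
      have hmono : ofs p q B S (c'+1) ≤ ofs p q B S n := ofs_mono p q B S (by omega)
      omega
    have hsum : ∑ c ∈ Finset.Icc lo (n-1), ((B.getD c default).L : ℤ)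
        = E - 1 - ofs p q B S lo := by
      have htele := ofs_tele p q B S hlon
      rw [Finset.sum_add_distrib] at htele
      have hite : ∑ c ∈ Finset.Ico lo n, (if c ∈ S then (q:ℤ)+1 else 0) = 0 := by
        apply Finset.sum_eq_zero
        intro c hc
        simp only [Finset.mem_Ico] at hc
        rw [if_neg]
        intro hcS
        exact hnosep c hcS hc.1 hc.2
      rw [hite] at htele
      have hIcc : Finset.Icc lo (n-1) = Finset.Ico lo n := by
        rw [← Finset.Ico_add_one_right_eq_Icc]
        congr 1
        omega
      rw [hIcc]
      omega
    set μ : ℝ := min ((filledFamily p q B S e).len : ℝ) ((E:ℝ) - x) with hμ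
    have hExn : ((E:ℤ):ℝ) = ((ofs p q B S n : ℤ):ℝ) + 1 := by rw [hE]; push_cast; ring
    have hμ1 : 1 < μ := by
      rw [hμ]
      apply lt_min (by linarith)
      rw [hExn]; linarith
    exact engine hq hpq hWF t hfeas lo (n-1) E e μ (by omega) he (by omega)
      (hlow (n-1) (by omega)) hEc hsum hlox hμ1 (min_le_left _ _)
      (by
        have := min_le_right ((filledFamily p q B S e).len : ℝ) ((E:ℝ) - x)
        rw [← hμ] at this
        linarith)
end Key


/-- Let `p > q > 1` and let a sequence of blocks `B` together with
separator positions `S` determine a filled AUX(p,q) instance (all blocks well formed,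
separator positions among the blocks, equally many pending tasks of each length, and the
`i`-th long pending task defined in a strictly earlier block than the `i`-th short one).
Then in any feasible schedule of all tasks of the instance, no task arising from a block
starts before that block's offset. -/
theorem no_start_before_offset (p q : ℕ) (hq : 1 < q) (hpq : q < p)
    (B : List (Block p q)) (S : Finset ℕ)
    (hWF : ∀ F ∈ B, F.WF) (hS : ∀ i ∈ S, i < B.length)
    (hN : (pendPList p q B S).length = (pendQList p q B S).length)
    (horder : ∀ i : Fin (pendPList p q B S).length,
      ((pendPList p q B S).get i).1 < ((pendQList p q B S).get (Fin.cast hN i)).1)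
    (t : FilledIdx p q B S → ℝ)
    (hfeas : FeasibleSchedule (filledFamily p q B S) t) :
    (∀ j : Fin (auxList p q B S).length,
      ((ofs p q B S ((auxList p q B S).get j).1 : ℤ) : ℝ) ≤ t (Sum.inr (Sum.inl j))) ∧
    (∀ j : Fin (pendPList p q B S).length,
      ((ofs p q B S ((pendPList p q B S).get j).1 : ℤ) : ℝ) ≤
        t (Sum.inr (Sum.inr (Sum.inl j)))) ∧
    (∀ j : Fin (pendQList p q B S).length,
      ((ofs p q B S ((pendQList p q B S).get j).1 : ℤ) : ℝ) ≤
        t (Sum.inr (Sum.inr (Sum.inr j)))) := by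
  refine ⟨fun j => ?_, fun j => ?_, fun j => ?_⟩
  · exact key hq hpq hWF t hfeas _ (Sum.inr (Sum.inl j)) rfl
  · exact key hq hpq hWF t hfeas _ (Sum.inr (Sum.inr (Sum.inl j))) rfl
  · exact key hq hpq hWF t hfeas _ (Sum.inr (Sum.inr (Sum.inr j))) rfl
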